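/- Let q be a prime power, m ≥ 2 an integer, n = q^m − 1, and δ_max = q^{⌈m/2⌉} − 1 − (q−2)·[m is odd]. Let δ be an integer with 2 ≤ δ ≤ δ_max, let Z_δ = C_1 ∪ ⋯ ∪ C_{δ−1} be the union of the q-ary cyclotomic cosets modulo n of 1, …, δ−1, and let T_δ = {(−z) mod n : z ∈ {0,1,…,n−1} \ Z_δ}. Then T_δ contains {0, 1, 2, …, δ_max − 1}, i.e. T_δ contains at least δ_max consecutive residues modulo n starting at 0. -/
import Mathlib


/-- The `q`-ary cyclotomic coset of `x` modulo `n`: `{x q^k mod n : k ≥ 0}`. -/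
def cycCoset (q n x : ℕ) : Set ℕ := {y | ∃ k : ℕ, y = x * q ^ k % n}

private lemma pow_mod_reduce (q n m x k : ℕ) (hm : 0 < m) (h : q ^ m % n = 1 % n) :
    x * q ^ k % n = x * q ^ (k % m) % n := by
  have h1 : q ^ m ≡ 1 [MOD n] := h
  have h2 : q ^ k ≡ q ^ (k % m) [MOD n] := by
    conv_lhs => rw [← Nat.div_add_mod k m]
    rw [pow_add, pow_mul]
    calc (q ^ m) ^ (k / m) * q ^ (k % m)
        ≡ 1 ^ (k / m) * q ^ (k % m) [MOD n] := Nat.ModEq.mul (h1.pow _) (Nat.ModEq.refl _)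
      _ = q ^ (k % m) := by rw [one_pow, one_mul]
  exact h2.mul_left x

private lemma self_mod_sub_one (N : ℕ) (h : 2 ≤ N) : N % (N - 1) = 1 % (N - 1) := by
  obtain ⟨n', hn'⟩ : ∃ n', N - 1 = n' := ⟨_, rfl⟩
  have hN : N = n' + 1 := by omega
  rw [hn', hN, Nat.add_mod_left]

/-- Decompose `x * b` modulo `a*b - 1` where `x = a*u + v`. -/
private lemma decomp_mod (a b u v N : ℕ) (hab : a * b = N) (hN : 2 ≤ N) :
    (a * u + v) * b % (N - 1) = (u + v * b) % (N - 1) := by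
  have h7 : (a * u + v) * b = N * u + v * b := by
    calc (a * u + v) * b = (a * b) * u + v * b := by ring
      _ = N * u + v * b := by rw [hab]
  have hkey : (a * u + v) * b = (u + v * b) + (N - 1) * u := by
    rw [h7]
    calc N * u + v * b = ((N - 1) + 1) * u + v * b := by rw [Nat.sub_add_cancel (by omega)]
      _ = (u + v * b) + (N - 1) * u := by ring
  rw [hkey, Nat.add_mul_mod_self_left]

private lemma key_even (q t x k : ℕ) (hq : 2 ≤ q) (ht : 1 ≤ t)
    (hx : x + 2 ≤ q ^ t) :
    x * q ^ k % (q ^ (2 * t) - 1) + q ^ t ≤ q ^ (2 * t) := by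
  have hP2 : 2 ≤ q ^ t := le_trans hq (Nat.le_self_pow (by omega) q)
  have hNP : q ^ (2 * t) = q ^ t * q ^ t := by rw [two_mul, pow_add]
  have h2P : 2 * q ^ t ≤ q ^ (2 * t) := by
    rw [hNP]; exact Nat.mul_le_mul_right _ hP2
  have hm : 0 < 2 * t := by omega
  have hN2 : 2 ≤ q ^ (2 * t) := by omega
  rw [pow_mod_reduce q (q ^ (2 * t) - 1) (2 * t) x k hm
    (self_mod_sub_one _ hN2)]
  obtain ⟨k', hk'⟩ : ∃ k', k % (2 * t) = k' := ⟨_, rfl⟩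
  rw [hk']
  have hk'm : k' < 2 * t := by rw [← hk']; exact Nat.mod_lt _ hm
  by_cases hcase : k' ≤ t
  · have h1 : q ^ k' ≤ q ^ t := Nat.pow_le_pow_right (by omega) hcase
    have h2 : x * q ^ k' ≤ (q ^ t - 2) * q ^ t := Nat.mul_le_mul (by omega) h1
    have h3 : (q ^ t - 2) * q ^ t + 2 * q ^ t = q ^ (2 * t) := by
      rw [← Nat.add_mul, Nat.sub_add_cancel hP2, hNP]
    obtain ⟨W, hW⟩ : ∃ W, x * q ^ k' = W := ⟨_, rfl⟩
    rw [hW] at h2 ⊢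
    have hlt : W < q ^ (2 * t) - 1 := by omega
    rw [Nat.mod_eq_of_lt hlt]
    omega
  · push_neg at hcase
    obtain ⟨s, hs⟩ : ∃ s, 2 * t - k' = s := ⟨_, rfl⟩
    have hs1 : 1 ≤ s := by omega
    have hab : q ^ s * q ^ k' = q ^ (2 * t) := by rw [← pow_add]; congr 1; omega
    obtain ⟨a, ha⟩ : ∃ a, q ^ s = a := ⟨_, rfl⟩
    obtain ⟨b, hb⟩ : ∃ b, q ^ k' = b := ⟨_, rfl⟩
    rw [ha, hb] at hab
    rw [hb]
    have hbB : 2 * q ^ t ≤ b := by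
      have h4 : q ^ (t + 1) ≤ q ^ k' := Nat.pow_le_pow_right (by omega) (by omega)
      have h5 : q ^ (t + 1) = q * q ^ t := by rw [pow_succ]; ring
      have h6 : 2 * q ^ t ≤ q * q ^ t := Nat.mul_le_mul_right _ hq
      omega
    have ha1 : 1 ≤ a := by
      rw [← ha]; exact Nat.one_le_two_pow.trans (Nat.pow_le_pow_left hq s)
    obtain ⟨u, v, hva, hxd⟩ : ∃ u v, v < a ∧ a * u + v = x :=
      ⟨x / a, x % a, Nat.mod_lt _ (by omega), Nat.div_add_mod x a⟩
    have hux : u ≤ x := by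
      have h11 : u ≤ a * u := Nat.le_mul_of_pos_left u (by omega)
      omega
    rw [← hxd, decomp_mod a b u v _ hab (by omega)]
    have hvb : v * b + b ≤ q ^ (2 * t) := by
      have h10 : (v + 1) * b ≤ a * b := Nat.mul_le_mul_right _ (by omega)
      rw [Nat.add_mul, one_mul] at h10
      omega
    obtain ⟨W, hW⟩ : ∃ W, v * b = W := ⟨_, rfl⟩
    rw [hW] at hvb ⊢
    have hlt : u + W < q ^ (2 * t) - 1 := by omega
    rw [Nat.mod_eq_of_lt hlt]
    omega

private lemma key_odd (q t x k : ℕ) (hq : 2 ≤ q) (ht : 2 ≤ t)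
    (hx : x + q ≤ q ^ t) :
    x * q ^ k % (q ^ (2 * t - 1) - 1) + q ^ t + 2 ≤ q ^ (2 * t - 1) + q := by
  have hqt1 : q ≤ q ^ (t - 1) := Nat.le_self_pow (by omega) q
  have hP2 : 2 ≤ q ^ t := le_trans hq (Nat.le_self_pow (by omega) q)
  have hAq : q ^ (t - 1) * q = q ^ t := by
    rw [← pow_succ]; congr 1; omega
  have hqP : q + 2 ≤ q ^ t := by
    have h0 : q * q ≤ q ^ (t - 1) * q := Nat.mul_le_mul_right _ hqt1
    nlinarith
  have hNP : q ^ (2 * t - 1) = q ^ (t - 1) * q ^ t := by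
    rw [← pow_add]; congr 1; omega
  have h2P : 2 * q ^ t ≤ q ^ (2 * t - 1) := by
    rw [hNP]
    exact Nat.mul_le_mul_right _ (le_trans (by omega) hqt1)
  have hm : 0 < 2 * t - 1 := by omega
  have hN2 : 2 ≤ q ^ (2 * t - 1) := by omega
  rw [pow_mod_reduce q (q ^ (2 * t - 1) - 1) (2 * t - 1) x k hm
    (self_mod_sub_one _ hN2)]
  obtain ⟨k', hk'⟩ : ∃ k', k % (2 * t - 1) = k' := ⟨_, rfl⟩
  rw [hk']
  have hk'm : k' < 2 * t - 1 := by rw [← hk']; exact Nat.mod_lt _ hm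
  by_cases hcase : k' ≤ t - 1
  · -- Case A: x * q^k' ≤ (q^t - q) * q^(t-1) = q^(2t-1) - q^t
    have h1 : q ^ k' ≤ q ^ (t - 1) := Nat.pow_le_pow_right (by omega) hcase
    have h2 : x * q ^ k' ≤ (q ^ t - q) * q ^ (t - 1) := Nat.mul_le_mul (by omega) h1
    have h3 : (q ^ t - q) * q ^ (t - 1) + q ^ t = q ^ (2 * t - 1) := by
      have h4 : q * q ^ (t - 1) = q ^ t := by rw [mul_comm]; exact hAq
      rw [Nat.sub_mul, h4, mul_comm (q ^ t) (q ^ (t - 1)), hNP]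
      have h5 : q ^ t ≤ q ^ (t - 1) * q ^ t :=
        Nat.le_mul_of_pos_left _ (by omega)
      omega
    obtain ⟨W, hW⟩ : ∃ W, x * q ^ k' = W := ⟨_, rfl⟩
    rw [hW] at h2 ⊢
    have hlt : W < q ^ (2 * t - 1) - 1 := by omega
    rw [Nat.mod_eq_of_lt hlt]
    omega
  · push_neg at hcase
    obtain ⟨s, hs⟩ : ∃ s, 2 * t - 1 - k' = s := ⟨_, rfl⟩
    have hs1 : 1 ≤ s := by omega
    have hst : s ≤ t - 1 := by omega
    have hab : q ^ s * q ^ k' = q ^ (2 * t - 1) := by rw [← pow_add]; congr 1; omega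
    obtain ⟨a, ha⟩ : ∃ a, q ^ s = a := ⟨_, rfl⟩
    obtain ⟨b, hb⟩ : ∃ b, q ^ k' = b := ⟨_, rfl⟩
    rw [ha, hb] at hab
    rw [hb]
    have ha1 : 1 ≤ a := by
      rw [← ha]; exact Nat.one_le_two_pow.trans (Nat.pow_le_pow_left hq s)
    obtain ⟨u, v, hva, hxd⟩ : ∃ u v, v < a ∧ a * u + v = x :=
      ⟨x / a, x % a, Nat.mod_lt _ (by omega), Nat.div_add_mod x a⟩
    have hux : u ≤ x := by
      have h11 : u ≤ a * u := Nat.le_mul_of_pos_left u (by omega)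
      omega
    rw [← hxd, decomp_mod a b u v _ hab (by omega)]
    by_cases hbig : t + 1 ≤ k'
    · -- b ≥ q^(t+1) ≥ 2 q^t
      have hbB : 2 * q ^ t ≤ b := by
        have h4 : q ^ (t + 1) ≤ q ^ k' := Nat.pow_le_pow_right (by omega) hbig
        have h5 : q ^ (t + 1) = q * q ^ t := by rw [pow_succ]; ring
        have h6 : 2 * q ^ t ≤ q * q ^ t := Nat.mul_le_mul_right _ hq
        omega
      have hvb : v * b + b ≤ q ^ (2 * t - 1) := by
        have h10 : (v + 1) * b ≤ a * b := Nat.mul_le_mul_right _ (by omega)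
        rw [Nat.add_mul, one_mul] at h10
        omega
      obtain ⟨W, hW⟩ : ∃ W, v * b = W := ⟨_, rfl⟩
      rw [hW] at hvb ⊢
      have hlt : u + W < q ^ (2 * t - 1) - 1 := by omega
      rw [Nat.mod_eq_of_lt hlt]
      omega
    · -- k' = t, s = t - 1, a = q^(t-1), b = q^t
      have hk't : k' = t := by omega
      have hst' : s = t - 1 := by omega
      have hbP : b = q ^ t := by rw [← hb, hk't]
      have haq : a * q = q ^ t := by rw [← ha, hst']; exact hAq
      have haP : a * q ^ t = q ^ (2 * t - 1) := by
        rw [← hb, hk't] at hab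
        exact hab
      have huq : u + 1 ≤ q := by
        by_contra hcon
        push_neg at hcon
        have h11 : a * q ≤ a * u := Nat.mul_le_mul_left a (by omega)
        rw [haq] at h11
        omega
      rw [hbP]
      by_cases hu2 : u + 2 ≤ q
      · -- u ≤ q - 2, v ≤ a - 1
        have hvb : v * q ^ t + q ^ t ≤ q ^ (2 * t - 1) := by
          have h10 : (v + 1) * q ^ t ≤ a * q ^ t := Nat.mul_le_mul_right _ (by omega)
          rw [Nat.add_mul, one_mul] at h10
          omega
        obtain ⟨W, hW⟩ : ∃ W, v * q ^ t = W := ⟨_, rfl⟩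
        rw [hW] at hvb ⊢
        have hlt : u + W < q ^ (2 * t - 1) - 1 := by omega
        rw [Nat.mod_eq_of_lt hlt]
        omega
      · -- u = q - 1, so v ≤ a - q
        have hueq : u + 1 = q := by omega
        have huaA : a * u + a = q ^ t := by
          calc a * u + a = a * (u + 1) := by ring
            _ = a * q := by rw [hueq]
            _ = q ^ t := haq
        have hvaq : v + q ≤ a := by omega
        have hqt2 : 2 * q ^ t ≤ q * q ^ t := Nat.mul_le_mul_right _ hq
        have hvb : v * q ^ t + q * q ^ t ≤ q ^ (2 * t - 1) := by
          have h10 : (v + q) * q ^ t ≤ a * q ^ t := Nat.mul_le_mul_right _ hvaq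
          rw [Nat.add_mul] at h10
          omega
        obtain ⟨W, hW⟩ : ∃ W, v * q ^ t = W := ⟨_, rfl⟩
        obtain ⟨R, hR⟩ : ∃ R, q * q ^ t = R := ⟨_, rfl⟩
        rw [hW, hR] at hvb
        rw [hR] at hqt2
        rw [hW]
        have hlt : u + W < q ^ (2 * t - 1) - 1 := by omega
        rw [Nat.mod_eq_of_lt hlt]
        omega

private lemma key (q m x k : ℕ) (hq : 2 ≤ q) (hm : 2 ≤ m)
    (hx2 : x + 1 ≤ q ^ ((m + 1) / 2) - 1 - (q - 2) * (if Odd m then 1 else 0)) :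
    x * q ^ k % (q ^ m - 1) + (q ^ ((m + 1) / 2) - 1 - (q - 2) * (if Odd m then 1 else 0))
      ≤ q ^ m - 1 := by
  rcases Nat.even_or_odd m with he | ho
  · have hodd : ¬ Odd m := by simp [Nat.odd_iff, Nat.even_iff] at he ⊢; omega
    rw [if_neg hodd, mul_zero, Nat.sub_zero] at hx2 ⊢
    obtain ⟨r, hr⟩ := he
    obtain ⟨t, htdef⟩ : ∃ t, (m + 1) / 2 = t := ⟨_, rfl⟩
    rw [htdef] at hx2 ⊢
    have hmt : m = 2 * t := by omega
    subst hmt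
    have hkey := key_even q t x k hq (by omega) (by omega)
    obtain ⟨X, hX⟩ : ∃ X, x * q ^ k % (q ^ (2 * t) - 1) = X := ⟨_, rfl⟩
    rw [hX] at hkey ⊢
    have hP2 : 2 ≤ q ^ t := le_trans hq (Nat.le_self_pow (by omega) q)
    omega
  · rw [if_pos ho, mul_one] at hx2 ⊢
    obtain ⟨r, hr⟩ := ho
    obtain ⟨t, htdef⟩ : ∃ t, (m + 1) / 2 = t := ⟨_, rfl⟩
    rw [htdef] at hx2 ⊢
    have hmt : m = 2 * t - 1 := by omega
    have ht2 : 2 ≤ t := by omega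
    have hqt : q ≤ q ^ t := Nat.le_self_pow (by omega) q
    subst hmt
    have hkey := key_odd q t x k hq ht2 (by omega)
    obtain ⟨X, hX⟩ : ∃ X, x * q ^ k % (q ^ (2 * t - 1) - 1) = X := ⟨_, rfl⟩
    rw [hX] at hkey ⊢
    omega

private lemma aux (q n δ D : ℕ) (hn2 : 2 ≤ n) (hDn : D < n) (hδ1 : 2 ≤ δ) (hδ : δ ≤ D)
    (hzero : ∀ x k, 1 ≤ x → x + 1 ≤ D → x * q ^ k % n ≠ 0)
    (hkey : ∀ x k, 1 ≤ x → x + 1 ≤ D → x * q ^ k % n + D ≤ n) :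
    Set.Iio D ⊆ (fun z => (n - z) % n) ''
      (Set.Iio n \ ⋃ x ∈ Set.Icc 1 (δ - 1), cycCoset q n x) := by
  intro i hi
  simp only [Set.mem_Iio] at hi
  rcases Nat.eq_zero_or_pos i with rfl | hipos
  · refine ⟨0, ⟨?_, ?_⟩, ?_⟩
    · exact Set.mem_Iio.mpr (by omega)
    · intro hmem
      simp only [Set.mem_iUnion, Set.mem_Icc, cycCoset, Set.mem_setOf_eq] at hmem
      obtain ⟨x, ⟨hx1, hx2⟩, k, hk⟩ := hmem
      exact hzero x k hx1 (by omega) hk.symm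
    · show (n - 0) % n = 0
      simp
  · refine ⟨n - i, ⟨?_, ?_⟩, ?_⟩
    · exact Set.mem_Iio.mpr (by omega)
    · intro hmem
      simp only [Set.mem_iUnion, Set.mem_Icc, cycCoset, Set.mem_setOf_eq] at hmem
      obtain ⟨x, ⟨hx1, hx2⟩, k, hk⟩ := hmem
      have h1 := hkey x k hx1 (by omega)
      rw [← hk] at h1
      omega
    · show (n - (n - i)) % n = i
      rw [Nat.sub_sub_self (by omega)]
      exact Nat.mod_eq_of_lt (by omega)

/-- For `n = q^m - 1`, `m ≥ 2`, `δ_max = q^⌈m/2⌉ - 1 - (q-2)·[m odd]` and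
`2 ≤ δ ≤ δ_max`: the defining set
`T_δ = {-z mod n : z ∈ {0,…,n-1} \ Z_δ}` of the dual code, where
`Z_δ = C_1 ∪ ⋯ ∪ C_{δ-1}`, contains `{0, 1, …, δ_max - 1}`. -/
theorem dual_defining_set_contains_consecutive
    (q m : ℕ) (hq : IsPrimePow q) (hm : 2 ≤ m)
    (δ : ℕ) (hδ1 : 2 ≤ δ)
    (hδ2 : δ ≤ q ^ ((m + 1) / 2) - 1 - (q - 2) * (if Odd m then 1 else 0)) :
    Set.Iio (q ^ ((m + 1) / 2) - 1 - (q - 2) * (if Odd m then 1 else 0)) ⊆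
      (fun z => (q ^ m - 1 - z) % (q ^ m - 1)) ''
        (Set.Iio (q ^ m - 1) \
          ⋃ x ∈ Set.Icc 1 (δ - 1), cycCoset q (q ^ m - 1) x) := by
  have hq2 : 2 ≤ q := hq.two_le
  have htm : (m + 1) / 2 < m := by omega
  have hqt : q ^ ((m + 1) / 2) < q ^ m := Nat.pow_lt_pow_right (by omega) htm
  have hqt2 : 2 ≤ q ^ ((m + 1) / 2) := le_trans hq2 (Nat.le_self_pow (by omega) q)
  have hDle : q ^ ((m + 1) / 2) - 1 - (q - 2) * (if Odd m then 1 else 0)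
      ≤ q ^ ((m + 1) / 2) - 1 := Nat.sub_le _ _
  have hDn : q ^ ((m + 1) / 2) - 1 - (q - 2) * (if Odd m then 1 else 0) < q ^ m - 1 := by
    omega
  have hn2 : 2 ≤ q ^ m - 1 := by omega
  have hcop : (q ^ m - 1).Coprime q := by
    obtain ⟨n', hn'⟩ : ∃ n', q ^ m - 1 = n' := ⟨_, rfl⟩
    have h2 : q ^ m = 1 + n' := by omega
    have h1 : Nat.Coprime (q ^ m) n' := by
      rw [h2, Nat.coprime_add_self_left]
      exact Nat.coprime_one_left _
    rw [hn']
    exact h1.symm.coprime_dvd_right (dvd_pow_self q (by omega))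
  refine aux q (q ^ m - 1) δ _ hn2 hDn hδ1 hδ2 ?_ ?_
  · intro x k hx1 hx2 h0
    have hdvd : q ^ m - 1 ∣ x * q ^ k := Nat.dvd_of_mod_eq_zero h0
    have hdx : q ^ m - 1 ∣ x := (hcop.pow_right k).dvd_of_dvd_mul_right hdvd
    have := Nat.le_of_dvd (by omega) hdx
    omega
  · intro x k hx1 hx2
    exact key q m x k hq2 hm hx2
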